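/- Let G be a graph in which a vertex u is adjacent to every other vertex, G - u is a forest, and every connected component of G - u has at least 2 vertices. Let F = V∖{u} = L ∪ R be a bipartition of the forest G - u with |L| ≤ |R|. Then R is a minimal feedback vertex set of G of size at least d(u)/2. -/

import Mathlib

open SimpleGraph

def IsFVS {V : Type*} (G : SimpleGraph V) (S : Set V) : Prop :=
  (G.induce Sᶜ).IsAcyclic

def IsMinFVS {V : Type*} (G : SimpleGraph V) (S : Set V) : Prop :=
  IsFVS G S ∧ ∀ T : Set V, T ⊂ S → ¬ IsFVS G T

noncomputable def mmfvs {V : Type*} (G : SimpleGraph V) : ℕ :=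
  sSup {k | ∃ S : Set V, IsMinFVS G S ∧ S.ncard = k}


lemma star_acyclic {W : Type*} {H : SimpleGraph W} {a : W}
    (h : ∀ x y, H.Adj x y → x = a ∨ y = a) : H.IsAcyclic := by
  intro v c hc
  classical
  have ha : a ∈ c.support := by
    by_contra ha
    cases c with
    | nil => simp at hc
    | cons hadj p =>
      rcases h _ _ hadj with rfl | rfl
      · exact ha (Walk.start_mem_support _)
      · exact ha (by simp)
  have hc' := hc.rotate ha
  revert hc'
  generalize c.rotate a ha = c'
  intro hc'
  match c', hc' with
  | .nil, hc' => simp at hc'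
  | .cons h₁ .nil, hc' => exact H.loopless.irrefl _ h₁
  | .cons h₁ (.cons h₂ .nil), hc' => exact absurd hc'.three_le_length (by simp)
  | .cons h₁ (.cons h₂ (.cons h₃ r)), hc' =>
    have hnd := hc'.support_nodup
    simp only [Walk.support_cons, List.tail_cons, List.nodup_cons] at hnd
    have haR : a ∈ r.support := Walk.end_mem_support r
    rcases h _ _ h₂ with rfl | rfl
    · exact hnd.1 (by simp [haR])
    · exact hnd.2.1 (by simp [haR])

lemma triangle_isCycle {W : Type*} {H : SimpleGraph W} {a b c : W}
    (hab : H.Adj a b) (hbc : H.Adj b c) (hca : H.Adj c a) (hac : a ≠ c) :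
    (Walk.cons hab (Walk.cons hbc (Walk.cons hca Walk.nil))).IsCycle := by
  have h1 := hab.ne
  have h2 := hbc.ne
  simp [Walk.isCycle_def, Walk.isTrail_def, Sym2.eq, Sym2.rel_iff', h1, h2, hac,
    h1.symm, h2.symm, hac.symm]


theorem bipartition_side_is_minimal_fvs {V : Type*} [Fintype V] [DecidableEq V]
    (G : SimpleGraph V) (u : V)
    (hu : G.neighborSet u = ({u}ᶜ : Set V))
    (hacyc : (G.induce ({u}ᶜ : Set V)).IsAcyclic)
    (hcomp : ∀ v : ({u}ᶜ : Set V), ∃ w : ({u}ᶜ : Set V), w ≠ v ∧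
      (G.induce ({u}ᶜ : Set V)).Reachable v w)
    (L R : Set V) (hLR : L ∪ R = ({u}ᶜ : Set V)) (hdisj : Disjoint L R)
    (hbip : ∀ v w : V, G.Adj v w → v ≠ u → w ≠ u →
      ((v ∈ L ∧ w ∈ R) ∨ (v ∈ R ∧ w ∈ L)))
    (hle : L.ncard ≤ R.ncard) :
    IsMinFVS G R ∧ (G.neighborSet u).ncard ≤ 2 * R.ncard := by

  have hadj_u : ∀ v : V, v ≠ u → G.Adj u v := by
    intro v hv
    have : v ∈ G.neighborSet u := by rw [hu]; simpa using hv
    exact this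
  have hRu : u ∉ R := by
    intro h
    have : u ∈ ({u}ᶜ : Set V) := hLR ▸ Set.mem_union_right _ h
    simp at this
  have hLu : u ∉ L := by
    intro h
    have : u ∈ ({u}ᶜ : Set V) := hLR ▸ Set.mem_union_left _ h
    simp at this
  refine ⟨⟨?_, ?_⟩, ?_⟩
  · -- R is an FVS: induced graph on Rᶜ is a star centered at u
    have huRc : u ∈ Rᶜ := hRu
    apply star_acyclic (a := (⟨u, huRc⟩ : (Rᶜ : Set V)))
    rintro ⟨x, hx⟩ ⟨y, hy⟩ hxy
    simp only [comap_adj, Function.Embedding.coe_subtype] at hxy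
    by_contra hcon
    push_neg at hcon
    obtain ⟨hxu, hyu⟩ := hcon
    have hxu' : x ≠ u := fun h => hxu (Subtype.ext h)
    have hyu' : y ≠ u := fun h => hyu (Subtype.ext h)
    rcases hbip x y hxy hxu' hyu' with ⟨_, h2⟩ | ⟨h1, _⟩
    · exact hy h2
    · exact hx h1
  · -- minimality
    intro T hT hfvs
    obtain ⟨r, hrR, hrT⟩ := Set.exists_of_ssubset hT
    have hru : r ≠ u := by rintro rfl; exact hRu hrR
    have hrc : r ∈ ({u}ᶜ : Set V) := hru
    obtain ⟨w, hwr, hreach⟩ := hcomp ⟨r, hrc⟩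
    obtain ⟨p⟩ := hreach
    -- p : walk from r to w in G - u; nonempty since w ≠ r
    have hx : ∃ x : ({u}ᶜ : Set V), G.Adj r x := by
      cases p with
      | nil => exact absurd rfl hwr.symm
      | cons hadj q =>
        rename_i x
        exact ⟨x, by simpa using hadj⟩
    obtain ⟨⟨x, hxc⟩, hrx⟩ := hx
    have hxu : x ≠ u := hxc
    have hxL : x ∈ L := by
      rcases hbip r x hrx hru hxu with ⟨h1, _⟩ | ⟨_, h2⟩
      · exact absurd hrR (Set.disjoint_left.mp hdisj h1)
      · exact h2
    have hxR : x ∉ R := Set.disjoint_left.mp hdisj hxL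
    -- triangle u - r - x - u in G.induce Tᶜ
    have huT : u ∉ T := fun h => hRu (hT.subset h)
    have hrT' : r ∉ T := hrT
    have hxT : x ∉ T := fun h => hxR (hT.subset h)
    have a1 : (G.induce (Tᶜ : Set V)).Adj ⟨u, huT⟩ ⟨r, hrT'⟩ := by
      simpa using hadj_u r hru
    have a2 : (G.induce (Tᶜ : Set V)).Adj ⟨r, hrT'⟩ ⟨x, hxT⟩ := by simpa using hrx
    have a3 : (G.induce (Tᶜ : Set V)).Adj ⟨x, hxT⟩ ⟨u, huT⟩ := by
      simpa using (hadj_u x hxu).symm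
    have hne : (⟨u, huT⟩ : (Tᶜ : Set V)) ≠ ⟨x, hxT⟩ := by
      simp [Subtype.ext_iff, Ne.symm hxu]
    exact hfvs _ (triangle_isCycle a1 a2 a3 hne)
  · -- cardinality
    rw [hu, ← hLR, Set.ncard_union_eq hdisj (Set.toFinite L) (Set.toFinite R)]
    omega
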